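/- Let R be a Noetherian local ring and x_1,...,x_{d-1} a regular sequence in the maximal ideal, and let 1 ≤ l ≤ N be integers. If y ∈ R satisfies x_1^{N-l}·x_2^{N-l}···x_{d-1}^{N-l}·y ∈ (x_1^N,...,x_{d-1}^N), then y ∈ (x_1^l,...,x_{d-1}^l). -/

import Mathlib

set_option maxHeartbeats 1000000
set_option synthInstance.maxHeartbeats 1000000

open IsLocalRing Polynomial

section StmtAux

open RingTheory.Sequence IsLocalRing

variable {R : Type*} [CommRing R]

private lemma reg_quot_iff' (I : Ideal R) (c : R) :
    IsSMulRegular (R ⧸ (I • ⊤ : Submodule R R)) c ↔ ∀ z : R, c * z ∈ I → z ∈ I := by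
  rw [isSMulRegular_quotient_iff_mem_of_smul_mem]
  simp [smul_eq_mul, Ideal.mul_top]

private lemma wri_iff' (L : List R) :
    IsWeaklyRegular R L ↔ ∀ i (_ : i < L.length) (z : R),
      L[i] * z ∈ Ideal.ofList (L.take i) → z ∈ Ideal.ofList (L.take i) := by
  rw [isWeaklyRegular_iff]
  exact forall_congr' fun i => forall_congr' fun h => reg_quot_iff' _ _

private lemma wr_take' {L : List R} (h : IsWeaklyRegular R L) (i : ℕ) :
    IsWeaklyRegular R (L.take i) :=
  ((isWeaklyRegular_append_iff R (L.take i) (L.drop i)).mp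
    (by rwa [List.take_append_drop])).1

private lemma reg_last' {K : List R} {u : R} (h : IsWeaklyRegular R (K ++ [u])) :
    ∀ z : R, u * z ∈ Ideal.ofList K → z ∈ Ideal.ofList K := by
  have h' := (wri_iff' _).mp h K.length (by simp)
  simpa using h'

private lemma headpow' [IsLocalRing R] [IsNoetherianRing R] (r : R) (rs : List R)
    (hm : ∀ a ∈ r :: rs, a ∈ maximalIdeal R)
    (h : IsWeaklyRegular R (r :: rs)) (n : ℕ) (hn : 1 ≤ n) :
    IsWeaklyRegular R (r ^ n :: rs) := by
  have hwri := (wri_iff' _).mp h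
  have H2 : ∀ i : ℕ, ∀ z : R, r * z ∈ Ideal.ofList (rs.take i) →
      z ∈ Ideal.ofList (rs.take i) := by
    intro i
    have hpre : IsWeaklyRegular R (r :: rs.take i) := by
      have := wr_take' h (i + 1)
      simpa using this
    have hperm : IsWeaklyRegular R (rs.take i ++ [r]) :=
      IsLocalRing.isWeaklyRegular_of_perm_of_subset_maximalIdeal hpre
        (List.perm_append_singleton r _).symm
        (fun a ha => hm a (by
          rcases List.mem_cons.mp ha with h1 | h1
          · exact h1 ▸ List.mem_cons_self (a := r) (l := rs)
          · exact List.mem_cons_of_mem r (List.mem_of_mem_take h1)))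
    exact reg_last' hperm
  have H2n : ∀ m : ℕ, ∀ i : ℕ, ∀ z : R, r ^ m * z ∈ Ideal.ofList (rs.take i) →
      z ∈ Ideal.ofList (rs.take i) := by
    intro m
    induction m with
    | zero => intro i z hz; simpa using hz
    | succ m ih =>
      intro i z hz
      have : r ^ m * (r * z) ∈ Ideal.ofList (rs.take i) := by
        rw [show r ^ m * (r * z) = r ^ (m + 1) * z by ring]; exact hz
      exact H2 i z (ih i (r * z) this)
  rw [wri_iff']
  intro i hi z
  match i with
  | 0 =>
    intro hz
    simp only [List.take_zero, Ideal.ofList_nil] at hz ⊢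
    simpa using H2n n 0 z (by simpa using hz)
  | (i + 1) =>
    have hi' : i < rs.length := by simpa using hi
    simp only [List.getElem_cons_succ, List.take_succ_cons, Ideal.ofList_cons]
    set J := Ideal.ofList (rs.take i) with hJ
    have H1 : ∀ z : R, rs[i] * z ∈ Ideal.span {r} ⊔ J → z ∈ Ideal.span {r} ⊔ J := by
      intro z hz
      have := hwri (i + 1) (by simpa using hi') z (by simpa using hz)
      simpa using this
    clear hwri
    induction n, hn using Nat.le_induction generalizing z with
    | base => simpa using H1 z
    | succ n hn ihn =>
      intro hz
      have hz' : rs[i] * z ∈ Ideal.span {r ^ n} ⊔ J := by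
        refine SetLike.le_def.mp (sup_le_sup_right ?_ J) hz
        exact Ideal.span_singleton_le_span_singleton.mpr ⟨r, pow_succ r n⟩
      obtain ⟨y, hy, j, hj, hyj⟩ := Submodule.mem_sup.mp (ihn z (by simpa using hi') hz')
      obtain ⟨b, hb⟩ := Ideal.mem_span_singleton'.mp hy
      obtain ⟨y', hy', j', hj', hyj'⟩ := Submodule.mem_sup.mp hz
      obtain ⟨a, ha⟩ := Ideal.mem_span_singleton'.mp hy'
      have key : r ^ n * (rs[i] * b - r * a) ∈ J := by
        have heq : r ^ n * (rs[i] * b - r * a) = j' - rs[i] * j := by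
          linear_combination rs[i] * hb - ha + rs[i] * hyj - hyj'
        rw [heq]
        exact J.sub_mem hj' (J.mul_mem_left _ hj)
      have hba : rs[i] * b - r * a ∈ J := H2n n i _ key
      have hrb : rs[i] * b ∈ Ideal.span {r} ⊔ J := by
        have : rs[i] * b = a * r + (rs[i] * b - r * a) := by ring
        rw [this]
        exact Submodule.add_mem_sup (Ideal.mem_span_singleton'.mpr ⟨a, rfl⟩) hba
      obtain ⟨y2, hy2, j2, hj2, hyj2⟩ := Submodule.mem_sup.mp (H1 b hrb)
      obtain ⟨c, hc⟩ := Ideal.mem_span_singleton'.mp hy2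
      have heq2 : z = c * r ^ (n + 1) + (j2 * r ^ n + j) := by
        linear_combination -hyj - hb - r ^ n * hyj2 - r ^ n * hc
      rw [heq2]
      exact Submodule.add_mem_sup (Ideal.mem_span_singleton'.mpr ⟨c, rfl⟩)
        (J.add_mem (J.mul_mem_right _ hj2) hj)

private lemma zip_rep' (L : List R) (e : ℕ) :
    List.zipWith (· ^ ·) L (List.replicate L.length e) = L.map (· ^ e) := by
  induction L with
  | nil => simp
  | cons a t ih => simp [List.replicate_succ, ih]

private lemma pow_list' [IsLocalRing R] [IsNoetherianRing R] :
    ∀ (t L1 : List R) (es : List ℕ), es.length = t.length → (∀ n ∈ es, 1 ≤ n) →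
    (∀ a ∈ L1 ++ t, a ∈ maximalIdeal R) → IsWeaklyRegular R (L1 ++ t) →
    IsWeaklyRegular R (L1 ++ List.zipWith (· ^ ·) t es) := by
  intro t
  induction t with
  | nil => intro L1 es _ _ _ hreg; simpa using (by simpa using hreg)
  | cons r t' ih =>
    intro L1 es hlen hes hm hreg
    match es with
    | [] => simp at hlen
    | n :: ens =>
      have hn : 1 ≤ n := hes n List.mem_cons_self
      have h1 : IsWeaklyRegular R (r :: (L1 ++ t')) :=
        IsLocalRing.isWeaklyRegular_of_perm_of_subset_maximalIdeal hreg
          List.perm_middle hm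
      have hm1 : ∀ a ∈ r :: (L1 ++ t'), a ∈ maximalIdeal R := by
        intro a ha
        exact hm a (List.perm_middle.symm.subset ha)
      have h2 : IsWeaklyRegular R (r ^ n :: (L1 ++ t')) := headpow' r _ hm1 h1 n hn
      have hm2 : ∀ a ∈ r ^ n :: (L1 ++ t'), a ∈ maximalIdeal R := by
        intro a ha
        rcases List.mem_cons.mp ha with h' | h'
        · subst h'
          exact Ideal.pow_mem_of_mem _ (hm1 r List.mem_cons_self) n hn
        · exact hm1 a (List.mem_cons_of_mem _ h')
      have h3 : IsWeaklyRegular R (L1 ++ r ^ n :: t') :=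
        IsLocalRing.isWeaklyRegular_of_perm_of_subset_maximalIdeal h2
          List.perm_middle.symm hm2
      have hm3 : ∀ a ∈ (L1 ++ [r ^ n]) ++ t', a ∈ maximalIdeal R := by
        intro a ha
        rw [List.append_assoc, List.singleton_append] at ha
        exact hm2 a (List.perm_middle.subset ha)
      have h4 := ih (L1 ++ [r ^ n]) ens (by simpa using hlen)
        (fun m hmm => hes m (List.mem_cons_of_mem _ hmm)) hm3
        (by rwa [List.append_assoc, List.singleton_append])
      rw [List.append_assoc, List.singleton_append] at h4
      simpa using h4

private lemma core' [IsLocalRing R] [IsNoetherianRing R] (l N : ℕ) (hl : 1 ≤ l)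
    (hlN : l ≤ N) :
    ∀ (t L1 : List R), (∀ a ∈ L1 ++ t, a ∈ maximalIdeal R) →
    IsWeaklyRegular R (L1 ++ t) → ∀ w : R,
    (t.map (· ^ (N - l))).prod * w ∈ Ideal.ofList (L1.map (· ^ l) ++ t.map (· ^ N)) →
    w ∈ Ideal.ofList ((L1 ++ t).map (· ^ l)) := by
  intro t
  induction t with
  | nil => intro L1 _ _ w hw; simpa using hw
  | cons r t' ih =>
    intro L1 hm hreg w hw
    set A := L1.map (· ^ l) with hA
    set B := t'.map (· ^ N) with hB
    set J := Ideal.ofList (A ++ B) with hJdef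
    set P := (t'.map (· ^ (N - l))).prod with hP
    have hsplit : Ideal.ofList (A ++ r ^ N :: B) = Ideal.span {r ^ N} ⊔ J := by
      rw [hJdef, Ideal.ofList_append, Ideal.ofList_cons, Ideal.ofList_append,
        sup_left_comm]
    have hw' : r ^ (N - l) * P * w ∈ Ideal.span {r ^ N} ⊔ J := by
      rw [← hsplit]
      simpa [mul_assoc] using hw
    obtain ⟨y, hy, j, hj, hyj⟩ := Submodule.mem_sup.mp hw'
    obtain ⟨d, hd⟩ := Ideal.mem_span_singleton'.mp hy
    have hNsplit : r ^ (N - l) * r ^ l = r ^ N := by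
      rw [← pow_add, Nat.sub_add_cancel hlN]
    have key : r ^ (N - l) * (P * w - r ^ l * d) ∈ J := by
      have heq : r ^ (N - l) * (P * w - r ^ l * d) = j := by
        linear_combination -hyj - d * hNsplit - hd
      rw [heq]; exact hj
    have hreg2 : ∀ z : R, r ^ (N - l) * z ∈ J → z ∈ J := by
      rcases Nat.eq_or_lt_of_le hlN with heq | hlt
      · intro z hz
        rw [← heq, Nat.sub_self, pow_zero, one_mul] at hz
        exact hz
      · have h1 : 1 ≤ N - l := by omega
        have hperm : IsWeaklyRegular R ((L1 ++ t') ++ [r]) :=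
          IsLocalRing.isWeaklyRegular_of_perm_of_subset_maximalIdeal hreg
            (List.perm_middle.trans (List.perm_append_singleton r _).symm) hm
        have hmm : ∀ a ∈ ([] : List R) ++ ((L1 ++ t') ++ [r]), a ∈ maximalIdeal R := by
          intro a ha
          rw [List.nil_append] at ha
          exact hm a ((List.perm_middle.trans
            (List.perm_append_singleton r _).symm).symm.subset ha)
        have hes : ∀ n ∈ (List.replicate L1.length l ++ List.replicate t'.length N)
            ++ [N - l], 1 ≤ n := by
          intro n hn
          simp only [List.mem_append, List.mem_replicate, List.mem_singleton] at hn
          rcases hn with (⟨_, h'⟩ | ⟨_, h'⟩) | h' <;> subst h' <;> omega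
        have hlen : ((List.replicate L1.length l ++ List.replicate t'.length N)
            ++ [N - l]).length = ((L1 ++ t') ++ [r]).length := by simp
        have hW := pow_list' ((L1 ++ t') ++ [r]) []
          ((List.replicate L1.length l ++ List.replicate t'.length N) ++ [N - l])
          hlen hes hmm (by simpa using hperm)
        rw [List.nil_append] at hW
        rw [List.zipWith_append (by simp),
          List.zipWith_append (by simp)] at hW
        rw [zip_rep' L1 l, show List.replicate t'.length N
            = List.replicate (t'.length) N from rfl] at hW
        rw [show (List.replicate t'.length N : List ℕ)
            = List.replicate t'.length N from rfl] at hW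
        have hz2 : List.zipWith (· ^ ·) t' (List.replicate t'.length N) = B := by
          rw [zip_rep']
        have hz3 : List.zipWith (· ^ ·) [r] [N - l] = [r ^ (N - l)] := by simp
        rw [hz2, hz3] at hW
        exact reg_last' hW
    have hPw : P * w - r ^ l * d ∈ J := hreg2 _ key
    have hnext : P * w ∈ Ideal.ofList ((L1 ++ [r]).map (· ^ l) ++ B) := by
      have hmap : (L1 ++ [r]).map (· ^ l) = A ++ [r ^ l] := by simp [hA]
      rw [hmap, List.append_assoc, List.singleton_append]
      have hJle : J ≤ Ideal.ofList (A ++ r ^ l :: B) := by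
        rw [hJdef]
        apply Ideal.span_mono
        intro a ha
        simp only [Set.mem_setOf_eq, List.mem_append, List.mem_cons] at ha ⊢
        tauto
      have hrl : r ^ l ∈ Ideal.ofList (A ++ r ^ l :: B) :=
        Ideal.subset_span (by simp)
      have : P * w = (P * w - r ^ l * d) + r ^ l * d := by ring
      rw [this]
      exact Ideal.add_mem _ (hJle hPw) (Ideal.mul_mem_right d _ hrl)
    have hfin := ih (L1 ++ [r])
      (by rwa [List.append_assoc, List.singleton_append])
      (by rwa [List.append_assoc, List.singleton_append]) w hnext
    rwa [List.append_assoc, List.singleton_append] at hfin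

end StmtAux


/-- The length of the `R`-module `M` (possibly infinite), as the Krull dimension of its
lattice of submodules. -/
noncomputable def moduleLength (R M : Type*) [CommRing R] [AddCommGroup M] [Module R M] :
    WithBot ℕ∞ :=
  Order.krullDim (Submodule R M)

/-- The depth of the module `M` with respect to the ideal `J` is at least `k`:
there is a regular sequence on `M` of length `k` consisting of elements of `J`. -/
def depthGE (R : Type*) [CommRing R] (J : Ideal R)
    (M : Type*) [AddCommGroup M] [Module R M] (k : ℕ) : Prop :=
  ∃ rs : List R, rs.length = k ∧ (∀ r ∈ rs, r ∈ J) ∧ RingTheory.Sequence.IsRegular M rs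

open RingTheory.Sequence in
/-- If `x 0, …, x (k-1)` is a regular sequence in the maximal ideal of a Noetherian local
ring, `1 ≤ l ≤ N`, and `(∏ᵢ x i ^ (N - l)) · w ∈ (x 0 ^ N, …, x (k-1) ^ N)`, then
`w ∈ (x 0 ^ l, …, x (k-1) ^ l)`. -/
theorem stmt4 {R : Type u} [CommRing R] [IsLocalRing R] [IsNoetherianRing R] (k : ℕ)
    (x : Fin k → R) (hx : ∀ i, x i ∈ maximalIdeal R)
    (hreg : RingTheory.Sequence.IsRegular R (List.ofFn x))
    (l N : ℕ) (hl : 1 ≤ l) (hlN : l ≤ N) (w : R)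
    (h : (∏ i, x i ^ (N - l)) * w ∈ Ideal.span (Set.range fun i => x i ^ N)) :
    w ∈ Ideal.span (Set.range fun i => x i ^ l) := by
  have hofn : ∀ e : ℕ, Ideal.ofList ((List.ofFn x).map (· ^ e))
      = Ideal.span (Set.range fun i => x i ^ e) := by
    intro e
    rw [List.map_ofFn]
    exact congrArg Ideal.span (Set.ext fun a => List.mem_ofFn)
  have hm : ∀ a ∈ ([] : List R) ++ List.ofFn x, a ∈ maximalIdeal R := by
    intro a ha
    rw [List.nil_append, List.mem_ofFn] at ha
    obtain ⟨i, rfl⟩ := ha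
    exact hx i
  have hwr : IsWeaklyRegular R (([] : List R) ++ List.ofFn x) := by
    simpa using hreg.toIsWeaklyRegular
  have hprod : ((List.ofFn x).map (· ^ (N - l))).prod = ∏ i, x i ^ (N - l) := by
    rw [List.map_ofFn, List.prod_ofFn]
    rfl
  have hcore := core' l N hl hlN (List.ofFn x) [] hm hwr w
    (by rw [hprod, List.map_nil, List.nil_append, hofn N]; exact h)
  rwa [List.nil_append, hofn l] at hcore
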